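/- Let G be a finite abelian p-group, n a positive integer, and w_n a positive integer. Then ∑_{g : [1,n] → G, ⟨g⟩ = G} ∏_{k=1}^n |H_g(k)|^{-1} ≥ 1 - |Sg(G)| p^{-n}, where H_g(k) = ⟨g(j) : max(1,k-w_n) ≤ j ≤ min(n,k+w_n)⟩ and Sg(G) is the set of subgroups of G. -/
import Mathlib


open scoped Classical

open Finset

/-- For a finite abelian `p`-group `G` and positive integers `n, wₙ`,
`∑_{g : [1,n] → G, ⟨g⟩ = G} ∏_{k=1}^n |H_g(k)|⁻¹ ≥ 1 - |Sg(G)| p^{-n}`, where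
`H_g(k) = ⟨g j : max(1, k - wₙ) ≤ j ≤ min(n, k + wₙ)⟩` and `Sg(G)` is the set of
subgroups of `G`. -/
theorem stmt7 (p : ℕ) [Fact p.Prime] (n wn : ℕ) (hn : 0 < n) (hw : 0 < wn)
    (G : Type*) [AddCommGroup G] [Fintype G]
    (hG : ∀ g : G, ∃ k : ℕ, (p ^ k : ℕ) • g = 0) :
    1 - (Nat.card (AddSubgroup G) : ℝ) * (p : ℝ) ^ (-(n : ℤ))
      ≤ ∑ g : Fin n → G,
          if AddSubgroup.closure (Set.range g) = ⊤ then
            ∏ k : Fin n,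
              ((Nat.card (AddSubgroup.closure
                (g '' {j : Fin n | |(j : ℤ) - (k : ℤ)| ≤ (wn : ℤ)})) : ℝ))⁻¹
          else 0 := by
  classical
  have hp : 0 < p := (Fact.out : p.Prime).pos
  set N := Nat.card G with hNdef
  have hN0 : 0 < N := Nat.card_pos
  -- G is a p-group, so N is a power of p
  have hpG : IsPGroup p (Multiplicative G) := by
    intro g
    obtain ⟨k, hk⟩ := hG (Multiplicative.toAdd g)
    refine ⟨k, ?_⟩
    rw [← ofAdd_toAdd g, ← ofAdd_nsmul, hk, ofAdd_zero]
  obtain ⟨m, hm'⟩ := IsPGroup.iff_card.mp hpG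
  have hm : N = p ^ m := by
    rw [hNdef, ← hm']
    exact (Nat.card_congr Multiplicative.toAdd).symm
  -- every subgroup has card ≤ N and positive card
  have hcard_le : ∀ H : AddSubgroup G, Nat.card H ≤ N := fun H =>
    Nat.le_of_dvd hN0 (AddSubgroup.card_addSubgroup_dvd_card H)
  have hcard_pos : ∀ H : AddSubgroup G, 0 < Nat.card H := fun H => Nat.card_pos
  -- proper subgroups have card ≤ N / p
  have hproper : ∀ H : AddSubgroup G, H ≠ ⊤ → Nat.card H ≤ N / p := by
    intro H hH
    have hdvd : Nat.card H ∣ p ^ m := hm ▸ AddSubgroup.card_addSubgroup_dvd_card H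
    obtain ⟨j, hjm, hj⟩ := (Nat.dvd_prime_pow (Fact.out : p.Prime)).mp hdvd
    have hjm' : j < m := by
      rcases lt_or_eq_of_le hjm with h | h
      · exact h
      · exact absurd (AddSubgroup.eq_top_of_card_eq H (by rw [hj, h, ← hm])) hH
    have hm1 : 1 ≤ m := Nat.one_le_of_lt hjm'
    calc Nat.card H = p ^ j := hj
      _ ≤ p ^ (m - 1) := Nat.pow_le_pow_right hp (by omega)
      _ = N / p := by rw [hm, ← Nat.pow_div hm1 hp, pow_one]
  set S := Nat.card (AddSubgroup G) with hSdef
  -- count non-generating tuples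
  have hne : (univ.filter
      (fun g : Fin n → G => ¬ AddSubgroup.closure (Set.range g) = ⊤)).card
      ≤ S * (N / p) ^ n := by
    have hsubset : (univ.filter
        (fun g : Fin n → G => ¬ AddSubgroup.closure (Set.range g) = ⊤))
        ⊆ (univ.filter (fun H : AddSubgroup G => H ≠ ⊤)).biUnion
          (fun H => univ.filter (fun g : Fin n → G => ∀ i, g i ∈ H)) := by
      intro g hg
      rw [mem_filter] at hg
      rw [mem_biUnion]
      refine ⟨AddSubgroup.closure (Set.range g), by simp [hg.2], ?_⟩
      simp only [mem_filter, mem_univ, true_and]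
      intro i
      exact AddSubgroup.subset_closure ⟨i, rfl⟩
    calc (univ.filter
        (fun g : Fin n → G => ¬ AddSubgroup.closure (Set.range g) = ⊤)).card
        ≤ ((univ.filter (fun H : AddSubgroup G => H ≠ ⊤)).biUnion
          (fun H => univ.filter (fun g : Fin n → G => ∀ i, g i ∈ H))).card :=
          Finset.card_le_card hsubset
      _ ≤ ∑ H ∈ univ.filter (fun H : AddSubgroup G => H ≠ ⊤),
            (univ.filter (fun g : Fin n → G => ∀ i, g i ∈ H)).card :=
          Finset.card_biUnion_le
      _ ≤ ∑ _H ∈ univ.filter (fun H : AddSubgroup G => H ≠ ⊤), (N / p) ^ n := by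
          apply Finset.sum_le_sum
          intro H hH
          rw [mem_filter] at hH
          have hcardH : (univ.filter (fun g : Fin n → G => ∀ i, g i ∈ H)).card
              = Nat.card H ^ n := by
            rw [← Fintype.card_subtype,
              Fintype.card_congr (Equiv.subtypePiEquivPi (p := fun _ b => b ∈ H))]
            simp [Nat.card_eq_fintype_card]
          rw [hcardH]
          exact Nat.pow_le_pow_left (hproper H hH.2) n
      _ ≤ S * (N / p) ^ n := by
          rw [Finset.sum_const, smul_eq_mul]
          have hle : (univ.filter (fun H : AddSubgroup G => H ≠ ⊤)).card ≤ S := by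
            rw [hSdef, Nat.card_eq_fintype_card]
            exact le_trans (Finset.card_filter_le _ _) (by simp)
          exact Nat.mul_le_mul_right _ hle
  -- generating tuples
  set Tgen := univ.filter
    (fun g : Fin n → G => AddSubgroup.closure (Set.range g) = ⊤) with hTgen
  have hNn : (0:ℝ) < (N:ℝ) ^ n := by positivity
  -- per-term lower bound
  have hterm : ∀ g : Fin n → G,
      ((N : ℝ) ^ n)⁻¹ ≤ ∏ k : Fin n,
        ((Nat.card (AddSubgroup.closure
          (g '' {j : Fin n | |(j : ℤ) - (k : ℤ)| ≤ (wn : ℤ)})) : ℝ))⁻¹ := by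
    intro g
    have h1 : ((N : ℝ) ^ n)⁻¹ = ∏ _k : Fin n, ((N : ℝ))⁻¹ := by
      simp [← inv_pow]
    rw [h1]
    apply Finset.prod_le_prod
    · intro k _; positivity
    · intro k _
      apply inv_anti₀
      · exact_mod_cast hcard_pos _
      · exact_mod_cast hcard_le _
  -- lower bound the sum
  have hsum : (Tgen.card : ℝ) * ((N : ℝ) ^ n)⁻¹
      ≤ ∑ g : Fin n → G,
          if AddSubgroup.closure (Set.range g) = ⊤ then
            ∏ k : Fin n,
              ((Nat.card (AddSubgroup.closure
                (g '' {j : Fin n | |(j : ℤ) - (k : ℤ)| ≤ (wn : ℤ)})) : ℝ))⁻¹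
          else 0 := by
    rw [← Finset.sum_filter]
    calc (Tgen.card : ℝ) * ((N : ℝ) ^ n)⁻¹
        = ∑ _g ∈ Tgen, ((N : ℝ) ^ n)⁻¹ := by rw [Finset.sum_const, nsmul_eq_mul]
      _ ≤ _ := Finset.sum_le_sum (fun g _ => hterm g)
  -- count generating tuples
  have hcount : (N : ℝ) ^ n - (S : ℝ) * ((N / p : ℕ) : ℝ) ^ n ≤ (Tgen.card : ℝ) := by
    have hc : Tgen.card + (univ.filter
        (fun g : Fin n → G => ¬ AddSubgroup.closure (Set.range g) = ⊤)).card
        = N ^ n := by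
      rw [hTgen, Finset.card_filter_add_card_filter_not, Finset.card_univ]
      simp [hNdef, Nat.card_eq_fintype_card]
    have hne' : ((univ.filter
        (fun g : Fin n → G => ¬ AddSubgroup.closure (Set.range g) = ⊤)).card : ℝ)
        ≤ (S : ℝ) * ((N / p : ℕ) : ℝ) ^ n := by exact_mod_cast hne
    have hc' : (Tgen.card : ℝ) + ((univ.filter
        (fun g : Fin n → G => ¬ AddSubgroup.closure (Set.range g) = ⊤)).card : ℝ)
        = (N : ℝ) ^ n := by exact_mod_cast hc
    linarith
  -- arithmetic
  have hNp : ((N / p : ℕ) : ℝ) ^ n ≤ (N : ℝ) ^ n * (p : ℝ) ^ (-(n : ℤ)) := by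
    have h1 : ((N / p : ℕ) : ℝ) ≤ (N : ℝ) / p := Nat.cast_div_le
    calc ((N / p : ℕ) : ℝ) ^ n ≤ ((N : ℝ) / p) ^ n :=
          pow_le_pow_left₀ (by positivity) h1 n
      _ = (N : ℝ) ^ n * (p : ℝ) ^ (-(n : ℤ)) := by
          rw [div_pow, zpow_neg, zpow_natCast, div_eq_mul_inv]
  refine le_trans ?_ hsum
  rw [← div_eq_mul_inv, le_div_iff₀ hNn]
  have h3 : (S : ℝ) * ((N / p : ℕ) : ℝ) ^ n
      ≤ (S : ℝ) * ((N : ℝ) ^ n * (p : ℝ) ^ (-(n : ℤ))) :=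
    mul_le_mul_of_nonneg_left hNp (by positivity)
  nlinarith [hcount, h3]
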